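/- Let m ≥ 2, 2* = 2m/(m-1), and let u, v be elements of a complex inner product space with |u − v| denoting norms. Then for the function Φ(w) = (1/2*)|w|^{2*}, and any w ≠ 0, the second-order Taylor quantity satisfies: (Φ''(w)[w,w] − Φ'(w)[w]) + 2(Φ''(w)[w,z] − Φ'(w)[z]) + Φ''(w)[z,z] ≥ (2/(m+1))·|w|^{2*} for every z, where Φ'(w)[z] = |w|^{2*-2}·Re⟨w,z⟩ and Φ''(w)[z₁,z₂] = |w|^{2*-2}·Re⟨z₁,z₂⟩ + (2*−2)·|w|^{2*-4}·Re⟨w,z₁⟩·Re⟨w,z₂⟩. -/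

import Mathlib

theorem stmt16 (m : ℕ) (hm : 2 ≤ m)
    (E : Type*) [NormedAddCommGroup E] [InnerProductSpace ℂ E]
    (q : ℝ) (hq : q = 2 * (m:ℝ) / ((m:ℝ) - 1))
    (w z : E) (hw : w ≠ 0)
    (B : E → ℝ) (hB : ∀ z₁ : E, B z₁ = ‖w‖ ^ (q - 2) * (inner ℂ w z₁ : ℂ).re)
    (A : E → E → ℝ)
    (hA : ∀ z₁ z₂ : E, A z₁ z₂ = ‖w‖ ^ (q - 2) * (inner ℂ z₁ z₂ : ℂ).re
        + (q - 2) * ‖w‖ ^ (q - 4) * (inner ℂ w z₁ : ℂ).re * (inner ℂ w z₂ : ℂ).re) :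
    (A w w - B w) + 2 * (A w z - B z) + A z z ≥ 2 / ((m:ℝ) + 1) * ‖w‖ ^ q := by
  have hM : (2:ℝ) ≤ (m:ℝ) := by exact_mod_cast hm
  have hM1 : (0:ℝ) < (m:ℝ) - 1 := by linarith
  have hM1' : (0:ℝ) < (m:ℝ) + 1 := by linarith
  have hq2 : q - 2 = 2 / ((m:ℝ) - 1) := by
    rw [hq]; field_simp; ring
  have ht0 : 0 < ‖w‖ := norm_pos_iff.mpr hw
  set t : ℝ := ‖w‖ with ht
  set s : ℝ := ‖z‖ with hs
  set a : ℝ := (inner ℂ w z : ℂ).re with ha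
  have hww : (inner ℂ w w : ℂ).re = t ^ 2 := by
    rw [ht]; exact_mod_cast inner_self_eq_norm_sq (𝕜 := ℂ) w
  have hzz : (inner ℂ z z : ℂ).re = s ^ 2 := by
    rw [hs]; exact_mod_cast inner_self_eq_norm_sq (𝕜 := ℂ) z
  have hCS : a ^ 2 ≤ t ^ 2 * s ^ 2 := by
    have h1 : |a| ≤ ‖(inner ℂ w z : ℂ)‖ := Complex.abs_re_le_norm _
    have h2 : ‖(inner ℂ w z : ℂ)‖ ≤ t * s := norm_inner_le_norm w z
    have h3 : |a| ≤ t * s := h1.trans h2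
    have := abs_nonneg a
    nlinarith [sq_abs a]
  have hP4 : (0:ℝ) < t ^ (q - 4) := Real.rpow_pos_of_pos ht0 _
  have e2 : t ^ (q - 2) = t ^ (q - 4) * t ^ 2 := by
    rw [show q - 2 = (q - 4) + 2 by ring,
      show (t:ℝ) ^ 2 = t ^ ((2:ℕ):ℝ) from (Real.rpow_natCast t 2).symm,
      ← Real.rpow_add ht0]
    norm_num
  have eq' : t ^ q = t ^ (q - 4) * t ^ 4 := by
    rw [show q = (q - 4) + 4 by ring,
      show (t:ℝ) ^ 4 = t ^ ((4:ℕ):ℝ) from (Real.rpow_natCast t 4).symm,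
      ← Real.rpow_add ht0]
    norm_num
  rw [hA, hA, hA, hB, hB, hww, hzz, ← ha, e2, eq', hq2]
  set P : ℝ := t ^ (q - 4) with hP
  set M : ℝ := (m:ℝ)
  have hts : 0 ≤ P * (t ^ 2 * s ^ 2 - a ^ 2) :=
    mul_nonneg hP4.le (by linarith)
  have hsq : 0 ≤ P / ((M - 1) * (M + 1)) * ((M + 1) * a + 2 * t ^ 2) ^ 2 := by
    have : 0 ≤ P / ((M - 1) * (M + 1)) := le_of_lt (div_pos hP4 (mul_pos hM1 hM1'))
    positivity
  have hid : (P * t ^ 2 * (t ^ 2) + 2 / (M - 1) * P * (t ^ 2) * (t ^ 2) - P * t ^ 2 * (t ^ 2))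
      + 2 * ((P * t ^ 2 * a + 2 / (M - 1) * P * (t ^ 2) * a) - P * t ^ 2 * a)
      + (P * t ^ 2 * s ^ 2 + 2 / (M - 1) * P * a * a)
      - 2 / (M + 1) * (P * t ^ 4)
      = P * (t ^ 2 * s ^ 2 - a ^ 2)
        + P / ((M - 1) * (M + 1)) * ((M + 1) * a + 2 * t ^ 2) ^ 2 := by
    field_simp
    ring
  nlinarith [hts, hsq, hid]
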